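/- For every real number t > 0, the set E(t) has a least element, and this minimum equals t(2 + t⁻³) when t⁻³ ≤ 6, and equals 8t when t⁻³ ≥ 6. -/

import Mathlib

/-- `γ_n(t) = t·n·(2 + n·t⁻³)` -/
noncomputable def gammaF (t : ℝ) (n : ℕ) : ℝ := t * n * (2 + n * (t ^ 3)⁻¹)

/-- `α_k(t) = t·(k(k+2) − 1 + t⁻³)` -/
noncomputable def alphaF (t : ℝ) (k : ℕ) : ℝ := t * (k * (k + 2) - 1 + (t ^ 3)⁻¹)

/-- `β_l(t) = t·l·(l+2)` -/
noncomputable def betaF (t : ℝ) (l : ℕ) : ℝ := t * l * (l + 2)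

/-- The set `E(t)` of nonzero eigenvalues of the unit-volume Berger sphere Laplacian. -/
def EV (t : ℝ) : Set ℝ :=
  {x | ∃ n : ℕ, 1 ≤ n ∧ x = gammaF t n} ∪
  {x | ∃ k : ℕ, Odd k ∧ 1 ≤ k ∧ x = alphaF t k} ∪
  {x | ∃ l : ℕ, Even l ∧ 2 ≤ l ∧ x = betaF t l}

theorem berger_spectrum_min (t : ℝ) (ht : 0 < t) :
    ∃ m : ℝ, IsLeast (EV t) m ∧
      ((t ^ 3)⁻¹ ≤ 6 → m = t * (2 + (t ^ 3)⁻¹)) ∧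
      (6 ≤ (t ^ 3)⁻¹ → m = 8 * t) := by
  set s := (t ^ 3)⁻¹ with hs
  have hspos : 0 < s := by positivity
  refine ⟨min (t * (2 + s)) (8 * t), ⟨?_, ?_⟩, ?_, ?_⟩
  · rcases le_total s 6 with h | h
    · have : min (t * (2 + s)) (8 * t) = t * (2 + s) := by
        apply min_eq_left; nlinarith
      rw [this]
      left; left
      exact ⟨1, le_refl 1, by simp [gammaF]; exact Or.inl hs⟩
    · have : min (t * (2 + s)) (8 * t) = 8 * t := by
        apply min_eq_right; nlinarith
      rw [this]
      right
      refine ⟨2, by norm_num, by norm_num, ?_⟩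
      simp [betaF]; ring
  · rintro x ((⟨n, hn, rfl⟩ | ⟨k, hk, hk1, rfl⟩) | ⟨l, hl, hl2, rfl⟩)
    · have hn' : (1 : ℝ) ≤ (n : ℝ) := by exact_mod_cast hn
      have : t * (2 + s) ≤ gammaF t n := by
        unfold gammaF; rw [← hs]
        have h1 : 0 ≤ t * ((n:ℝ) - 1) := mul_nonneg ht.le (by linarith)
        have h2 : 0 ≤ t * s * ((n:ℝ) * (n:ℝ) - 1) :=
          mul_nonneg (mul_pos ht hspos).le (by nlinarith)
        nlinarith [h1, h2]
      exact le_trans (min_le_left _ _) this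
    · have hk' : (1 : ℝ) ≤ (k : ℝ) := by exact_mod_cast hk1
      have : t * (2 + s) ≤ alphaF t k := by
        unfold alphaF; rw [← hs]
        have h1 : 0 ≤ t * ((k:ℝ) * ((k:ℝ) + 2) - 3) := mul_nonneg ht.le (by nlinarith)
        nlinarith [h1]
      exact le_trans (min_le_left _ _) this
    · have hl' : (2 : ℝ) ≤ (l : ℝ) := by exact_mod_cast hl2
      have : 8 * t ≤ betaF t l := by
        unfold betaF
        have h1 : 0 ≤ t * ((l:ℝ) * ((l:ℝ) + 2) - 8) := mul_nonneg ht.le (by nlinarith)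
        nlinarith [h1]
      exact le_trans (min_le_right _ _) this
  · intro h; apply min_eq_left; nlinarith
  · intro h; apply min_eq_right; nlinarith
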